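/- arXiv:2507.13094 — 2 statements merged into one kernel-verified Lean document; each statement's English description precedes it below -/
import Mathlib

section
/- Let F and G be Lipschitz with constants L_F and L_G in the entrywise sup-norm, with 0 < L_F < 1/γ_F and 0 < L_G < 1/γ_G. For ξ = (k,ℓ,i,j), define R^{(i,j)}(A,B) := B + (γ_F F_{i,j}(A) − B_{i,j}) E^{i,j} and S^{(k,ℓ)}(A,B) := A + α (γ_G G_{k,ℓ}(B) − A_{k,ℓ}) E^{k,ℓ}, where α ∈ (0,1) and E^{i,j} is the matrix with a single 1 in entry (i,j). Then the operator T^ξ(A,B) := (S^{(k,ℓ)}(A, R^{(i,j)}(A,B)), R^{(i,j)}(A,B)) is nonexpansive on ℝ^{m×m} × ℝ^{n×n} with respect to the norm ‖(A,B)‖_∞ := max{‖A‖_∞, ‖B‖_∞}. -/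
/-- Entrywise sup-norm of a matrix. -/
noncomputable def supNorm {m n : ℕ} (A : Matrix (Fin m) (Fin n) ℝ) : ℝ :=
  ‖(fun i j => A i j : Fin m → Fin n → ℝ)‖

/-- Single-entry update of `B` using `F`. -/
noncomputable def Rop {m n : ℕ} (F : Matrix (Fin m) (Fin m) ℝ → Matrix (Fin n) (Fin n) ℝ)
    (γF : ℝ) (i j : Fin n) (A : Matrix (Fin m) (Fin m) ℝ) (B : Matrix (Fin n) (Fin n) ℝ) :
    Matrix (Fin n) (Fin n) ℝ :=
  B + (γF * F A i j - B i j) • Matrix.single i j (1 : ℝ)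

/-- Single-entry relaxed update of `A` using `G`. -/
noncomputable def Sop {m n : ℕ} (G : Matrix (Fin n) (Fin n) ℝ → Matrix (Fin m) (Fin m) ℝ)
    (γG α : ℝ) (k l : Fin m) (A : Matrix (Fin m) (Fin m) ℝ) (B : Matrix (Fin n) (Fin n) ℝ) :
    Matrix (Fin m) (Fin m) ℝ :=
  A + (α * (γG * G B k l - A k l)) • Matrix.single k l (1 : ℝ)

lemma abs_le_supNorm {m n : ℕ} (A : Matrix (Fin m) (Fin n) ℝ) (i : Fin m) (j : Fin n) :
    |A i j| ≤ supNorm A := by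
  have h1 : ‖A i j‖ ≤ ‖(A i : Fin n → ℝ)‖ := norm_le_pi_norm (A i) j
  have h2 : ‖(fun j => A i j : Fin n → ℝ)‖ ≤ supNorm A :=
    norm_le_pi_norm (fun i j => A i j) i
  simpa [Real.norm_eq_abs] using h1.trans h2

lemma supNorm_nonneg {m n : ℕ} (A : Matrix (Fin m) (Fin n) ℝ) : 0 ≤ supNorm A :=
  norm_nonneg _

lemma supNorm_le {m n : ℕ} (A : Matrix (Fin m) (Fin n) ℝ) {c : ℝ} (hc : 0 ≤ c)
    (h : ∀ i j, |A i j| ≤ c) : supNorm A ≤ c := by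
  rw [supNorm]
  refine (pi_norm_le_iff_of_nonneg hc).2 fun i => (pi_norm_le_iff_of_nonneg hc).2 fun j => ?_
  simpa [Real.norm_eq_abs] using h i j

theorem single_entry_update_nonexpansive {m n : ℕ}
    (F : Matrix (Fin m) (Fin m) ℝ → Matrix (Fin n) (Fin n) ℝ)
    (G : Matrix (Fin n) (Fin n) ℝ → Matrix (Fin m) (Fin m) ℝ)
    (LF LG γF γG α : ℝ) (hγF : 0 < γF) (hγG : 0 < γG)
    (hα : 0 < α) (hα1 : α < 1)
    (hLF : 0 < LF) (hLF' : LF < 1 / γF)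
    (hLG : 0 < LG) (hLG' : LG < 1 / γG)
    (hF : ∀ A A', supNorm (F A - F A') ≤ LF * supNorm (A - A'))
    (hG : ∀ B B', supNorm (G B - G B') ≤ LG * supNorm (B - B')) :
    ∀ (k l : Fin m) (i j : Fin n)
      (A A' : Matrix (Fin m) (Fin m) ℝ) (B B' : Matrix (Fin n) (Fin n) ℝ),
      max (supNorm (Sop G γG α k l A (Rop F γF i j A B)
                  - Sop G γG α k l A' (Rop F γF i j A' B')))
          (supNorm (Rop F γF i j A B - Rop F γF i j A' B'))
        ≤ max (supNorm (A - A')) (supNorm (B - B')) := by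
  intro k l i j A A' B B'
  set M : ℝ := max (supNorm (A - A')) (supNorm (B - B')) with hMdef
  have hM0 : 0 ≤ M := le_trans (supNorm_nonneg _) (le_max_left _ _)
  have hAM : ∀ p q, |(A - A') p q| ≤ M := fun p q =>
    (abs_le_supNorm _ p q).trans (le_max_left _ _)
  have hBM : ∀ p q, |(B - B') p q| ≤ M := fun p q =>
    (abs_le_supNorm _ p q).trans (le_max_right _ _)
  have hγFLF : γF * LF ≤ 1 := by
    have := (lt_div_iff₀ hγF).1 hLF'
    nlinarith
  have hγGLG : γG * LG ≤ 1 := by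
    have := (lt_div_iff₀ hγG).1 hLG'
    nlinarith
  -- bound for the F-entry
  have hFent : |γF * F A i j - γF * F A' i j| ≤ M := by
    have h1 : |F A i j - F A' i j| ≤ LF * supNorm (A - A') := by
      have := abs_le_supNorm (F A - F A') i j
      simpa [Matrix.sub_apply] using this.trans (hF A A')
    have h2 : supNorm (A - A') ≤ M := le_max_left _ _
    have : |γF * F A i j - γF * F A' i j| = γF * |F A i j - F A' i j| := by
      rw [← mul_sub, abs_mul, abs_of_pos hγF]
    rw [this]
    nlinarith [abs_nonneg (F A i j - F A' i j), supNorm_nonneg (A - A')]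
  -- bound on R difference
  have hR : supNorm (Rop F γF i j A B - Rop F γF i j A' B') ≤ M := by
    refine supNorm_le _ hM0 fun p q => ?_
    by_cases h : p = i ∧ q = j
    · obtain ⟨hp, hq⟩ := h; subst hp; subst hq
      simpa [Rop, Matrix.sub_apply, Matrix.add_apply, Matrix.smul_apply,
        Matrix.single_apply_same] using hFent
    · have hz : ∀ c : ℝ, Matrix.single i j c p q = 0 := fun c =>
        Matrix.single_apply_of_ne _ _ _ _ _ (fun hh => h ⟨hh.1.symm, hh.2.symm⟩)
      simpa [Rop, Matrix.sub_apply, Matrix.add_apply, Matrix.smul_apply, hz] using hBM p q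
  -- bound for the G-entry
  set RB := Rop F γF i j A B
  set RB' := Rop F γF i j A' B'
  have hGent : |γG * G RB k l - γG * G RB' k l| ≤ M := by
    have h1 : |G RB k l - G RB' k l| ≤ LG * supNorm (RB - RB') := by
      have := abs_le_supNorm (G RB - G RB') k l
      simpa [Matrix.sub_apply] using this.trans (hG RB RB')
    have h2 : |γG * G RB k l - γG * G RB' k l| = γG * |G RB k l - G RB' k l| := by
      rw [← mul_sub, abs_mul, abs_of_pos hγG]
    rw [h2]
    nlinarith [abs_nonneg (G RB k l - G RB' k l), supNorm_nonneg (RB - RB')]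
  have hS : supNorm (Sop G γG α k l A RB - Sop G γG α k l A' RB') ≤ M := by
    refine supNorm_le _ hM0 fun p q => ?_
    by_cases h : p = k ∧ q = l
    · obtain ⟨hp, hq⟩ := h; subst hp; subst hq
      have hAkl : |A p q - A' p q| ≤ M := by simpa [Matrix.sub_apply] using hAM p q
      have key : (Sop G γG α p q A RB - Sop G γG α p q A' RB') p q
          = (1 - α) * (A p q - A' p q) + α * (γG * G RB p q - γG * G RB' p q) := by
        simp [Sop, Matrix.sub_apply, Matrix.add_apply, Matrix.smul_apply,
          Matrix.single_apply_same]
        ring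
      rw [key]
      calc |(1 - α) * (A p q - A' p q) + α * (γG * G RB p q - γG * G RB' p q)|
          ≤ |(1 - α) * (A p q - A' p q)| + |α * (γG * G RB p q - γG * G RB' p q)| :=
            abs_add_le _ _
        _ ≤ (1 - α) * M + α * M := by
            rw [abs_mul, abs_mul, abs_of_nonneg (by linarith : (0:ℝ) ≤ 1 - α),
              abs_of_pos hα]
            have := mul_le_mul_of_nonneg_left hAkl (by linarith : (0:ℝ) ≤ 1 - α)
            have := mul_le_mul_of_nonneg_left hGent (le_of_lt hα)
            linarith
        _ = M := by ring
    · have hz : ∀ c : ℝ, Matrix.single k l c p q = 0 := fun c =>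
        Matrix.single_apply_of_ne _ _ _ _ _ (fun hh => h ⟨hh.1.symm, hh.2.symm⟩)
      simpa [Sop, Matrix.sub_apply, Matrix.add_apply, Matrix.smul_apply, hz] using hAM p q
  exact max_le hS hR
end

section
/- Let F, G be Lipschitz with constants L_F, L_G in the entrywise sup-norm and assume 0 < L_F ≤ √α/(√2 m γ_F) and 0 < L_G ≤ 1/(n γ_G) with n, m > 1. Let (A,B) be the unique fixed point of (A,B) ↦ (γ_G G(B), γ_F F(A)). Then the random function iteration, which in each step picks uniformly random indices and updates one entry of B by B_{i,j} ← γ_F F_{i,j}(A) and one entry of A by A_{k,ℓ} ← (1-α)A_{k,ℓ} + α γ_G G_{k,ℓ}(B^{new}), satisfies E[‖(A^{t+1},B^{t+1}) − (A,B)‖_2²] ≤ L ‖(A^t,B^t) − (A,B)‖_2² with L := max{1 − α/m² + (1 + α γ_G² L_G²) γ_F² L_F², (1 + α γ_G² L_G²)(1 − 1/n²)} < 1, and the iterates converge almost surely to (A,B). -/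
open MeasureTheory ProbabilityTheory Filter Topology
open scoped ENNReal

/-- Frobenius norm of a matrix. -/
noncomputable def frobNorm {m n : ℕ} (A : Matrix (Fin m) (Fin n) ℝ) : ℝ :=
  Real.sqrt (∑ i, ∑ j, (A i j) ^ 2)

/-- Squared `‖(A,B)‖₂`-distance between two matrix pairs. -/
noncomputable def pairDistSq {m n : ℕ}
    (p q : Matrix (Fin m) (Fin m) ℝ × Matrix (Fin n) (Fin n) ℝ) : ℝ :=
  frobNorm (p.1 - q.1) ^ 2 + frobNorm (p.2 - q.2) ^ 2

lemma supNorm_nonneg_s5 {p q : ℕ} (M : Matrix (Fin p) (Fin q) ℝ) : 0 ≤ supNorm M :=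
  norm_nonneg _

lemma abs_entry_le_supNorm {p q : ℕ} (M : Matrix (Fin p) (Fin q) ℝ) (i : Fin p) (j : Fin q) :
    |M i j| ≤ supNorm M := by
  have h1 : ‖M i j‖ ≤ ‖(fun j => M i j : Fin q → ℝ)‖ := norm_le_pi_norm _ j
  have h2 : ‖(fun j => M i j : Fin q → ℝ)‖ ≤ supNorm M :=
    norm_le_pi_norm (fun i j => M i j : Fin p → Fin q → ℝ) i
  calc |M i j| = ‖M i j‖ := (Real.norm_eq_abs _).symm
    _ ≤ _ := h1.trans h2

lemma supNorm_le_iff {p q : ℕ} (M : Matrix (Fin p) (Fin q) ℝ) {c : ℝ} (hc : 0 ≤ c) :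
    supNorm M ≤ c ↔ ∀ i j, |M i j| ≤ c := by
  rw [supNorm, pi_norm_le_iff_of_nonneg hc]
  refine forall_congr' fun i => ?_
  rw [pi_norm_le_iff_of_nonneg hc]
  simp [Real.norm_eq_abs]

lemma supNorm_sq_le {p q : ℕ} (M : Matrix (Fin p) (Fin q) ℝ) :
    supNorm M ^ 2 ≤ ∑ i, ∑ j, (M i j) ^ 2 := by
  set S := ∑ i, ∑ j, (M i j) ^ 2 with hS
  have hS0 : 0 ≤ S := Finset.sum_nonneg fun i _ => Finset.sum_nonneg fun j _ => sq_nonneg _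
  have h : supNorm M ≤ Real.sqrt S := by
    rw [supNorm_le_iff _ (Real.sqrt_nonneg _)]
    intro i j
    rw [← Real.sqrt_sq_eq_abs]
    refine Real.sqrt_le_sqrt ?_
    calc (M i j)^2 ≤ ∑ j', (M i j')^2 :=
          Finset.single_le_sum (f := fun j' => (M i j')^2) (fun j _ => sq_nonneg _) (Finset.mem_univ j)
      _ ≤ S := Finset.single_le_sum (f := fun i => ∑ j, (M i j)^2)
          (fun i _ => Finset.sum_nonneg fun j _ => sq_nonneg _) (Finset.mem_univ i)
  calc supNorm M ^ 2 ≤ Real.sqrt S ^ 2 := pow_le_pow_left₀ (supNorm_nonneg_s5 _) h 2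
    _ = S := Real.sq_sqrt hS0

lemma frobNorm_sq {p q : ℕ} (M : Matrix (Fin p) (Fin q) ℝ) :
    frobNorm M ^ 2 = ∑ i, ∑ j, (M i j) ^ 2 :=
  Real.sq_sqrt (Finset.sum_nonneg fun i _ => Finset.sum_nonneg fun j _ => sq_nonneg _)

lemma pert_apply {p q : ℕ} (X : Matrix (Fin p) (Fin q) ℝ) (k : Fin p) (l : Fin q) (c : ℝ)
    (i : Fin p) (j : Fin q) :
    (X + c • Matrix.single k l (1:ℝ)) i j = if k = i ∧ l = j then X i j + c else X i j := by
  by_cases h : k = i ∧ l = j <;>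
    simp [Matrix.add_apply, Matrix.smul_apply, Matrix.single, h, smul_eq_mul]

lemma pert_fsq {p q : ℕ} (X : Matrix (Fin p) (Fin q) ℝ) (k : Fin p) (l : Fin q) (c : ℝ) :
    ∑ i, ∑ j, ((X + c • Matrix.single k l (1:ℝ)) i j)^2
      = (∑ i, ∑ j, (X i j)^2) - (X k l)^2 + (X k l + c)^2 := by
  have key : ∀ i j, ((X + c • Matrix.single k l (1:ℝ)) i j)^2
      = (X i j)^2 + (if k = i then (if l = j then (X k l + c)^2 - (X k l)^2 else 0) else 0) := by
    intro i j
    rw [pert_apply]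
    by_cases h1 : k = i
    · by_cases h2 : l = j
      · subst h1; subst h2; simp only [if_pos rfl, and_self, if_pos]; ring
      · simp [h1, h2]
    · simp [h1]
  have inner : ∀ i : Fin p, (∑ j, if k = i then (if l = j then (X k l + c)^2 - (X k l)^2 else 0) else 0)
      = if k = i then (X k l + c)^2 - (X k l)^2 else 0 := by
    intro i
    by_cases h : k = i <;> simp [h]
  simp_rw [key, Finset.sum_add_distrib, inner, Finset.sum_ite_eq, Finset.mem_univ, if_true]
  ring

lemma Rop_sub {m n : ℕ} (F : Matrix (Fin m) (Fin m) ℝ → Matrix (Fin n) (Fin n) ℝ)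
    (γF : ℝ) (i j : Fin n) (A : Matrix (Fin m) (Fin m) ℝ) (B Bstar : Matrix (Fin n) (Fin n) ℝ) :
    Rop F γF i j A B - Bstar
      = (B - Bstar) + (γF * F A i j - B i j) • Matrix.single i j (1:ℝ) := by
  ext a b
  simp [Rop, Matrix.sub_apply, Matrix.add_apply]
  ring

lemma Sop_sub {m n : ℕ} (G : Matrix (Fin n) (Fin n) ℝ → Matrix (Fin m) (Fin m) ℝ)
    (γG α : ℝ) (k l : Fin m) (A Astar : Matrix (Fin m) (Fin m) ℝ) (B : Matrix (Fin n) (Fin n) ℝ) :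
    Sop G γG α k l A B - Astar
      = (A - Astar) + (α * (γG * G B k l - A k l)) • Matrix.single k l (1:ℝ) := by
  ext a b
  simp [Sop, Matrix.sub_apply, Matrix.add_apply]
  ring

set_option maxHeartbeats 2000000 in
lemma contraction_step {m n : ℕ} (hm : 1 < m) (hn : 1 < n)
    (F : Matrix (Fin m) (Fin m) ℝ → Matrix (Fin n) (Fin n) ℝ)
    (G : Matrix (Fin n) (Fin n) ℝ → Matrix (Fin m) (Fin m) ℝ)
    (LF LG γF γG α : ℝ) (hγF : 0 < γF) (hγG : 0 < γG) (hα : 0 < α) (hα1 : α < 1)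
    (hLF : 0 < LF) (hLG : 0 < LG)
    (hF : ∀ A A', supNorm (F A - F A') ≤ LF * supNorm (A - A'))
    (hG : ∀ B B', supNorm (G B - G B') ≤ LG * supNorm (B - B'))
    (Astar : Matrix (Fin m) (Fin m) ℝ) (Bstar : Matrix (Fin n) (Fin n) ℝ)
    (hfixA : Astar = γG • G Bstar) (hfixB : Bstar = γF • F Astar)
    (A : Matrix (Fin m) (Fin m) ℝ) (B : Matrix (Fin n) (Fin n) ℝ) :
    (1 / ((m : ℝ) ^ 2 * (n : ℝ) ^ 2)) *
        ∑ k : Fin m, ∑ l : Fin m, ∑ i : Fin n, ∑ j : Fin n,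
          pairDistSq
            (Sop G γG α k l A (Rop F γF i j A B), Rop F γF i j A B) (Astar, Bstar)
        ≤ max (1 - α / (m : ℝ) ^ 2 + (1 + α * γG ^ 2 * LG ^ 2) * γF ^ 2 * LF ^ 2)
              ((1 + α * γG ^ 2 * LG ^ 2) * (1 - 1 / (n : ℝ) ^ 2))
          * pairDistSq (A, B) (Astar, Bstar) := by
  have hm0 : (0:ℝ) < (m:ℝ)^2 := by positivity
  have hn0 : (0:ℝ) < (n:ℝ)^2 := by positivity
  obtain ⟨cF, hcF⟩ : ∃ cF : ℝ, cF = γF^2*LF^2 := ⟨_, rfl⟩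
  obtain ⟨cG, hcG⟩ : ∃ cG : ℝ, cG = γG^2*LG^2 := ⟨_, rfl⟩
  obtain ⟨dA, hdA⟩ : ∃ dA : ℝ, dA = ∑ a, ∑ b, ((A - Astar) a b)^2 := ⟨_, rfl⟩
  obtain ⟨dB, hdB⟩ : ∃ dB : ℝ, dB = ∑ a, ∑ b, ((B - Bstar) a b)^2 := ⟨_, rfl⟩
  have hdA0 : 0 ≤ dA := hdA ▸
    Finset.sum_nonneg fun _ _ => Finset.sum_nonneg fun _ _ => sq_nonneg _
  have hdB0 : 0 ≤ dB := hdB ▸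
    Finset.sum_nonneg fun _ _ => Finset.sum_nonneg fun _ _ => sq_nonneg _
  obtain ⟨gB, hgBval⟩ : ∃ gB : Fin n → Fin n → ℝ,
      ∀ i j, gB i j = ∑ a, ∑ b, ((Rop F γF i j A B - Bstar) a b)^2 := ⟨_, fun _ _ => rfl⟩
  have hBe : ∀ i j, Bstar i j = γF * F Astar i j := by
    intro i j; rw [hfixB]; simp [Matrix.smul_apply, smul_eq_mul]
  have hAe : ∀ k l, Astar k l = γG * G Bstar k l := by
    intro k l; rw [hfixA]; simp [Matrix.smul_apply, smul_eq_mul]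
  have hFB : ∀ i j, (γF * F A i j - Bstar i j)^2 ≤ cF * dA := by
    intro i j
    have a1 : |(F A - F Astar) i j| ≤ LF * supNorm (A - Astar) :=
      (abs_entry_le_supNorm _ i j).trans (hF A Astar)
    have a2 : supNorm (A - Astar)^2 ≤ dA := hdA ▸ supNorm_sq_le _
    have e1 : ((F A - F Astar) i j)^2 ≤ LF^2 * dA := by
      calc ((F A - F Astar) i j)^2 = |(F A - F Astar) i j|^2 := (sq_abs _).symm
        _ ≤ (LF * supNorm (A - Astar))^2 := pow_le_pow_left₀ (abs_nonneg _) a1 2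
        _ = LF^2 * supNorm (A - Astar)^2 := by ring
        _ ≤ LF^2 * dA := by nlinarith [sq_nonneg LF]
    have e0 : (γF * F A i j - Bstar i j)^2 = γF^2 * ((F A - F Astar) i j)^2 := by
      rw [hBe]; simp only [Matrix.sub_apply]; ring
    rw [e0, hcF]
    nlinarith [sq_nonneg γF]
  have hgBeq : ∀ i j, gB i j
      = dB - ((B - Bstar) i j)^2 + (γF * F A i j - Bstar i j)^2 := by
    intro i j
    have hcc : (B - Bstar) i j + (γF * F A i j - B i j) = γF * F A i j - Bstar i j := by
      simp only [Matrix.sub_apply]; ring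
    rw [hgBval, Rop_sub, pert_fsq, hcc, hdB]
  have hgB0 : ∀ i j, 0 ≤ gB i j := by
    intro i j
    rw [hgBval]
    exact Finset.sum_nonneg fun _ _ => Finset.sum_nonneg fun _ _ => sq_nonneg _
  have hgB : ∀ i j, gB i j ≤ dB - ((B - Bstar) i j)^2 + cF * dA := by
    intro i j; rw [hgBeq]; linarith [hFB i j]
  obtain ⟨SB, hSBdef⟩ : ∃ SB : ℝ, SB = ∑ i, ∑ j, gB i j := ⟨_, rfl⟩
  have hSB0 : 0 ≤ SB := hSBdef ▸
    (Finset.sum_nonneg fun i _ => Finset.sum_nonneg fun j _ => hgB0 i j)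
  have hSB : SB ≤ ((n:ℝ)^2 - 1) * dB + (n:ℝ)^2 * (cF * dA) := by
    have step : SB ≤ ∑ i : Fin n, ∑ j : Fin n, (dB - ((B - Bstar) i j)^2 + cF * dA) := by
      rw [hSBdef]
      exact Finset.sum_le_sum fun i _ => Finset.sum_le_sum fun j _ => hgB i j
    refine step.trans (le_of_eq ?_)
    have expand : ∑ i : Fin n, ∑ j : Fin n, (dB - ((B - Bstar) i j)^2 + cF * dA)
        = (n:ℝ)^2 * (dB + cF * dA) - dB := by
      rw [hdB]
      simp only [sub_add_eq_add_sub, Finset.sum_sub_distrib, Finset.sum_const,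
        Finset.card_univ, Fintype.card_fin, nsmul_eq_mul]
      push_cast
      ring
    rw [expand]; ring
  -- A step, for an arbitrary matrix B'
  have conv : ∀ u v : ℝ, ((1-α)*u + α*v)^2 ≤ (1-α)*u^2 + α*v^2 := by
    intro u v
    nlinarith [sq_nonneg (u - v), mul_pos hα (sub_pos.2 hα1)]
  have hgA : ∀ (k l : Fin m) (B' : Matrix (Fin n) (Fin n) ℝ),
      (∑ a, ∑ b, ((Sop G γG α k l A B' - Astar) a b)^2)
        ≤ dA - α * ((A - Astar) k l)^2 + α * cG * (∑ a, ∑ b, ((B' - Bstar) a b)^2) := by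
    intro k l B'
    obtain ⟨gB', hgB'⟩ : ∃ g : ℝ, g = ∑ a, ∑ b, ((B' - Bstar) a b)^2 := ⟨_, rfl⟩
    rw [← hgB']
    have a1 : |(G B' - G Bstar) k l| ≤ LG * supNorm (B' - Bstar) :=
      (abs_entry_le_supNorm _ k l).trans (hG B' Bstar)
    have a2 : supNorm (B' - Bstar)^2 ≤ gB' := hgB' ▸ supNorm_sq_le _
    have e1 : ((G B' - G Bstar) k l)^2 ≤ LG^2 * gB' := by
      calc ((G B' - G Bstar) k l)^2 = |(G B' - G Bstar) k l|^2 := (sq_abs _).symm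
        _ ≤ (LG * supNorm (B' - Bstar))^2 := pow_le_pow_left₀ (abs_nonneg _) a1 2
        _ = LG^2 * supNorm (B' - Bstar)^2 := by ring
        _ ≤ LG^2 * gB' := by nlinarith [sq_nonneg LG]
    have hy2 : (γG * (G B' k l - G Bstar k l))^2 ≤ cG * gB' := by
      have e0 : (γG * (G B' k l - G Bstar k l))^2 = γG^2 * ((G B' - G Bstar) k l)^2 := by
        simp only [Matrix.sub_apply]; ring
      rw [e0, hcG]
      nlinarith [sq_nonneg γG]
    have hcc : (A - Astar) k l + α * (γG * G B' k l - A k l)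
        = (1-α)*((A - Astar) k l) + α*(γG * (G B' k l - G Bstar k l)) := by
      simp only [Matrix.sub_apply]
      rw [hAe k l]; ring
    rw [Sop_sub, pert_fsq, ← hdA, hcc]
    have c1 := conv ((A - Astar) k l) (γG * (G B' k l - G Bstar k l))
    have c2 : α * (γG * (G B' k l - G Bstar k l))^2 ≤ α * (cG * gB') :=
      mul_le_mul_of_nonneg_left hy2 hα.le
    nlinarith
  -- combine
  have hpair : ∀ (k l : Fin m) (i j : Fin n),
      pairDistSq (Sop G γG α k l A (Rop F γF i j A B), Rop F γF i j A B) (Astar, Bstar)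
        = (∑ a, ∑ b, ((Sop G γG α k l A (Rop F γF i j A B) - Astar) a b)^2) + gB i j := by
    intro k l i j
    rw [pairDistSq, hgBval]
    rw [frobNorm_sq, frobNorm_sq]
  obtain ⟨c, hc⟩ : ∃ c : ℝ, c = α * cG + 1 := ⟨_, rfl⟩
  have hc0 : 0 ≤ c := by
    rw [hc, hcG]; positivity
  have hstep : (∑ k : Fin m, ∑ l : Fin m, ∑ i : Fin n, ∑ j : Fin n,
      pairDistSq (Sop G γG α k l A (Rop F γF i j A B), Rop F γF i j A B) (Astar, Bstar))
      ≤ (m:ℝ)^2*(n:ℝ)^2*dA - α*(n:ℝ)^2*dA + (m:ℝ)^2*(c*SB) := by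
    have pointwise : ∀ (k l : Fin m) (i j : Fin n),
        pairDistSq (Sop G γG α k l A (Rop F γF i j A B), Rop F γF i j A B) (Astar, Bstar)
          ≤ dA - α * ((A - Astar) k l)^2 + c * gB i j := by
      intro k l i j
      rw [hpair, hc]
      have h1 := hgA k l (Rop F γF i j A B)
      rw [← hgBval i j] at h1
      have h2 := hgB0 i j
      nlinarith
    have sum_le : (∑ k : Fin m, ∑ l : Fin m, ∑ i : Fin n, ∑ j : Fin n,
        pairDistSq (Sop G γG α k l A (Rop F γF i j A B), Rop F γF i j A B) (Astar, Bstar))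
        ≤ ∑ k : Fin m, ∑ l : Fin m, ∑ i : Fin n, ∑ j : Fin n,
            (dA - α * ((A - Astar) k l)^2 + c * gB i j) :=
      Finset.sum_le_sum fun k _ => Finset.sum_le_sum fun l _ =>
        Finset.sum_le_sum fun i _ => Finset.sum_le_sum fun j _ => pointwise k l i j
    refine sum_le.trans (le_of_eq ?_)
    have inner : ∀ K : ℝ, (∑ i : Fin n, ∑ j : Fin n, (K + c * gB i j))
        = (n:ℝ)^2 * K + c * SB := by
      intro K
      rw [hSBdef]
      simp only [Finset.sum_add_distrib, Finset.sum_const, Finset.card_univ,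
        Fintype.card_fin, nsmul_eq_mul, ← Finset.mul_sum]
      push_cast
      ring
    have inner' : ∀ k l : Fin m, (∑ i : Fin n, ∑ j : Fin n,
        (dA - α * ((A - Astar) k l)^2 + c * gB i j))
        = (n:ℝ)^2 * (dA - α * ((A - Astar) k l)^2) + c * SB := fun k l => inner _
    simp only [inner']
    have outer : (∑ k : Fin m, ∑ l : Fin m,
        ((n:ℝ)^2 * (dA - α * ((A - Astar) k l)^2) + c * SB))
        = (m:ℝ)^2 * ((n:ℝ)^2 * dA) - (n:ℝ)^2 * α * dA + (m:ℝ)^2 * (c * SB) := by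
      rw [hdA]
      simp only [mul_sub, Finset.sum_add_distrib, Finset.sum_sub_distrib, Finset.sum_const,
        Finset.card_univ, Fintype.card_fin, nsmul_eq_mul, ← Finset.mul_sum]
      push_cast
      ring
    rw [outer]
    ring
  have hpd : pairDistSq (A, B) (Astar, Bstar) = dA + dB := by
    rw [pairDistSq, frobNorm_sq, frobNorm_sq, hdA, hdB]
  obtain ⟨L1, hL1def⟩ : ∃ L1 : ℝ,
    L1 = 1 - α / (m : ℝ) ^ 2 + (1 + α * γG ^ 2 * LG ^ 2) * γF ^ 2 * LF ^ 2 := ⟨_, rfl⟩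
  obtain ⟨L2, hL2def⟩ : ∃ L2 : ℝ,
    L2 = (1 + α * γG ^ 2 * LG ^ 2) * (1 - 1 / (n : ℝ) ^ 2) := ⟨_, rfl⟩
  rw [← hL1def, ← hL2def, hpd]
  have hL1 : L1 ≤ max L1 L2 := le_max_left _ _
  have hL2 : L2 ≤ max L1 L2 := le_max_right _ _
  rw [one_div, inv_mul_eq_div, div_le_iff₀ (by positivity : (0:ℝ) < (m:ℝ)^2*(n:ℝ)^2)]
  have key : (m:ℝ)^2*(n:ℝ)^2*dA - α*(n:ℝ)^2*dA
        + (m:ℝ)^2*(c*(((n:ℝ)^2 - 1) * dB + (n:ℝ)^2 * (cF * dA)))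
      = ((m:ℝ)^2*(n:ℝ)^2*L1)*dA + ((m:ℝ)^2*(n:ℝ)^2*L2)*dB := by
    rw [hL1def, hL2def, hc, hcF, hcG]
    field_simp
    ring
  have hmono : (m:ℝ)^2*(c*SB)
      ≤ (m:ℝ)^2*(c*(((n:ℝ)^2 - 1) * dB + (n:ℝ)^2 * (cF * dA))) := by
    have h1 : c * SB ≤ c * (((n:ℝ)^2 - 1) * dB + (n:ℝ)^2 * (cF * dA)) :=
      mul_le_mul_of_nonneg_left hSB hc0
    nlinarith [hm0]
  have final : ((m:ℝ)^2*(n:ℝ)^2*L1)*dA + ((m:ℝ)^2*(n:ℝ)^2*L2)*dB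
      ≤ max L1 L2 * (dA + dB) * ((m:ℝ)^2*(n:ℝ)^2) := by
    nlinarith [mul_nonneg (mul_nonneg (sub_nonneg.2 hL1) hdA0) (mul_pos hm0 hn0).le,
      mul_nonneg (mul_nonneg (sub_nonneg.2 hL2) hdB0) (mul_pos hm0 hn0).le]
  calc (∑ k : Fin m, ∑ l : Fin m, ∑ i : Fin n, ∑ j : Fin n,
      pairDistSq (Sop G γG α k l A (Rop F γF i j A B), Rop F γF i j A B) (Astar, Bstar))
      ≤ (m:ℝ)^2*(n:ℝ)^2*dA - α*(n:ℝ)^2*dA + (m:ℝ)^2*(c*SB) := hstep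
    _ ≤ (m:ℝ)^2*(n:ℝ)^2*dA - α*(n:ℝ)^2*dA
        + (m:ℝ)^2*(c*(((n:ℝ)^2 - 1) * dB + (n:ℝ)^2 * (cF * dA))) := by linarith
    _ = ((m:ℝ)^2*(n:ℝ)^2*L1)*dA + ((m:ℝ)^2*(n:ℝ)^2*L2)*dB := key
    _ ≤ max L1 L2 * (dA + dB) * ((m:ℝ)^2*(n:ℝ)^2) := final

lemma sq_bound {γ L a b : ℝ} (hγ : 0 < γ) (hL : 0 < L) (hb : 0 < b) (ha : 0 ≤ a)
    (h : L ≤ a / (b * γ)) : γ^2 * L^2 ≤ a^2 / b^2 := by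
  have h1 : γ * L ≤ a / b := by
    rw [le_div_iff₀ hb]
    have h2 : L * (b * γ) ≤ a := by
      rw [← le_div_iff₀ (by positivity)]
      exact h
    nlinarith
  have h0 : 0 ≤ γ * L := by positivity
  have := pow_le_pow_left₀ h0 h1 2
  rw [div_pow] at this
  nlinarith

set_option maxHeartbeats 1000000 in
lemma consts_lt {m n : ℕ} (hm : 1 < m) (hn : 1 < n)
    (LF LG γF γG α : ℝ) (hγF : 0 < γF) (hγG : 0 < γG) (hα : 0 < α) (hα1 : α < 1)
    (hLF : 0 < LF) (hLF' : LF ≤ Real.sqrt α / (Real.sqrt 2 * m * γF))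
    (hLG : 0 < LG) (hLG' : LG ≤ 1 / (n * γG)) :
    (1 - α / (m : ℝ) ^ 2 + (1 + α * γG ^ 2 * LG ^ 2) * γF ^ 2 * LF ^ 2 < 1) ∧
    ((1 + α * γG ^ 2 * LG ^ 2) * (1 - 1 / (n : ℝ) ^ 2) < 1) := by
  have hm2 : (2:ℝ) ≤ (m:ℝ) := by exact_mod_cast hm
  have hn2 : (2:ℝ) ≤ (n:ℝ) := by exact_mod_cast hn
  have hm0 : (0:ℝ) < (m:ℝ)^2 := by positivity
  have hn0 : (0:ℝ) < (n:ℝ)^2 := by positivity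
  have hF2 : γF^2 * LF^2 ≤ α / (2 * (m:ℝ)^2) := by
    have := sq_bound hγF hLF (by positivity : (0:ℝ) < Real.sqrt 2 * m)
      (Real.sqrt_nonneg α) hLF'
    have e : (Real.sqrt α)^2 / (Real.sqrt 2 * m)^2 = α / (2 * (m:ℝ)^2) := by
      rw [mul_pow, Real.sq_sqrt hα.le, Real.sq_sqrt (by norm_num : (0:ℝ) ≤ 2)]
    rw [e] at this
    exact this
  have hG2 : γG^2 * LG^2 ≤ 1 / (n:ℝ)^2 := by
    have := sq_bound hγG hLG (by positivity : (0:ℝ) < (n:ℝ)) (by norm_num : (0:ℝ) ≤ 1) hLG'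
    simpa using this
  have hFpos : 0 < γF^2 * LF^2 := by positivity
  have hGpos : 0 < γG^2 * LG^2 := by positivity
  have hv : (0:ℝ) < 1 / (n:ℝ)^2 := by positivity
  have hv1 : 1 / (n:ℝ)^2 ≤ 1 := by
    rw [div_le_one hn0]; nlinarith
  have hq1 : α * γG^2 * LG^2 < 1 := by nlinarith
  constructor
  · have key : (1 + α * γG ^ 2 * LG ^ 2) * (γF ^ 2 * LF ^ 2) < α / (m:ℝ)^2 := by
      have e2 : α / (2 * (m:ℝ)^2) = (α / (m:ℝ)^2) / 2 := by ring
      rw [e2] at hF2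
      have hu : 0 < α / (m:ℝ)^2 := by positivity
      nlinarith [mul_pos (sub_pos.2 hq1) hu, mul_le_mul_of_nonneg_left hF2
        (by positivity : (0:ℝ) ≤ 1 + α * γG ^ 2 * LG ^ 2)]
    have e : (1 + α * γG ^ 2 * LG ^ 2) * γF ^ 2 * LF ^ 2
        = (1 + α * γG ^ 2 * LG ^ 2) * (γF ^ 2 * LF ^ 2) := by ring
    rw [e]
    linarith [key]
  · have hqv : α * γG^2 * LG^2 < 1/(n:ℝ)^2 := by nlinarith
    nlinarith [mul_pos hα hGpos, hqv, hv]

set_option maxHeartbeats 2000000 in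
lemma as_conv {m n : ℕ} (hm : 1 < m) (hn : 1 < n)
    (F : Matrix (Fin m) (Fin m) ℝ → Matrix (Fin n) (Fin n) ℝ)
    (G : Matrix (Fin n) (Fin n) ℝ → Matrix (Fin m) (Fin m) ℝ)
    (LF LG γF γG α : ℝ) (hγF : 0 < γF) (hγG : 0 < γG) (hα : 0 < α) (hα1 : α < 1)
    (hLF : 0 < LF) (hLF' : LF ≤ Real.sqrt α / (Real.sqrt 2 * m * γF))
    (hLG : 0 < LG) (hLG' : LG ≤ 1 / (n * γG))
    (hF : ∀ A A', supNorm (F A - F A') ≤ LF * supNorm (A - A'))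
    (hG : ∀ B B', supNorm (G B - G B') ≤ LG * supNorm (B - B'))
    (Astar : Matrix (Fin m) (Fin m) ℝ) (Bstar : Matrix (Fin n) (Fin n) ℝ)
    (hfixA : Astar = γG • G Bstar) (hfixB : Bstar = γF • F Astar)
    {Ω : Type*} [MeasurableSpace Ω] (μ : Measure Ω) [IsProbabilityMeasure μ]
    (ξ : ℕ → Ω → (Fin m × Fin m) × (Fin n × Fin n))
    (hmeas : ∀ t, Measurable (ξ t))
    (hindep : iIndepFun ξ μ)
    (hunif : ∀ t x, μ (ξ t ⁻¹' {x}) = 1 / ((m : ENNReal) ^ 2 * (n : ENNReal) ^ 2))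
    (Aseq : Ω → ℕ → Matrix (Fin m) (Fin m) ℝ)
    (Bseq : Ω → ℕ → Matrix (Fin n) (Fin n) ℝ)
    (hrecB : ∀ ω t, Bseq ω (t + 1)
      = Rop F γF (ξ t ω).2.1 (ξ t ω).2.2 (Aseq ω t) (Bseq ω t))
    (hrecA : ∀ ω t, Aseq ω (t + 1)
      = Sop G γG α (ξ t ω).1.1 (ξ t ω).1.2 (Aseq ω t) (Bseq ω (t + 1))) :
    ∀ᵐ ω ∂μ, Filter.Tendsto (fun t => pairDistSq (Aseq ω t, Bseq ω t) (Astar, Bstar))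
        Filter.atTop (nhds 0) := by
  ----------------------------------------------------------------
  -- Part 0: scalar constants
  ----------------------------------------------------------------
  have hm2 : (2:ℝ) ≤ (m:ℝ) := by exact_mod_cast hm
  have hn2 : (2:ℝ) ≤ (n:ℝ) := by exact_mod_cast hn
  have hsF0 : (0:ℝ) ≤ γF * LF := by positivity
  have hsG0 : (0:ℝ) ≤ γG * LG := by positivity
  have hsF : γF * LF < 1 := by
    have hden : (1:ℝ) ≤ Real.sqrt 2 * m := by
      nlinarith [Real.sqrt_nonneg 2, Real.sq_sqrt (by norm_num : (0:ℝ) ≤ 2),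
        Real.sqrt_pos.2 (by norm_num : (0:ℝ) < 2)]
    have h1 : γF * LF ≤ Real.sqrt α / (Real.sqrt 2 * m) := by
      have h2 : LF * (Real.sqrt 2 * m * γF) ≤ Real.sqrt α := by
        rw [← le_div_iff₀ (by positivity)]
        exact hLF'
      rw [le_div_iff₀ (by positivity : (0:ℝ) < Real.sqrt 2 * m)]
      nlinarith
    have h3 : Real.sqrt α / (Real.sqrt 2 * m) ≤ Real.sqrt α :=
      div_le_self (Real.sqrt_nonneg α) hden
    have h4 : Real.sqrt α < 1 := by
      have := Real.sqrt_lt_sqrt hα.le hα1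
      simpa using this
    linarith
  have hsG : γG * LG ≤ 1 / (n:ℝ) := by
    have h2 : LG * ((n:ℝ) * γG) ≤ 1 := by
      rw [← le_div_iff₀ (by positivity)]
      exact hLG'
    rw [le_div_iff₀ (by positivity : (0:ℝ) < (n:ℝ))]
    nlinarith
  have hsG1 : γG * LG < 1 := by
    have : (1:ℝ) / (n:ℝ) < 1 := by
      rw [div_lt_one (by positivity)]; linarith
    linarith
  obtain ⟨q, hqdef⟩ : ∃ q : ℝ, q = max (γF * LF) (1 - α + α * (γG * LG)) := ⟨_, rfl⟩
  have hr0 : (0:ℝ) ≤ 1 - α + α * (γG * LG) := by nlinarith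
  have hq0 : 0 ≤ q := hqdef ▸ le_max_of_le_right hr0
  have hq1 : q < 1 := by
    rw [hqdef]
    exact max_lt hsF (by nlinarith)
  have hsFq : γF * LF ≤ q := hqdef ▸ le_max_left _ _
  have hrq : 1 - α + α * (γG * LG) ≤ q := hqdef ▸ le_max_right _ _
  ----------------------------------------------------------------
  -- Part 1: almost surely, every index pattern occurs at all times
  ----------------------------------------------------------------
  have hgood : ∀ᵐ ω ∂μ, ∀ v : (Fin m × Fin m) × (Fin n × Fin n),
      ∀ N : ℕ, ∃ t, N ≤ t ∧ ξ t ω = v := by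
    rw [ae_all_iff]
    intro v
    have hsm : ∀ t, MeasurableSet (ξ t ⁻¹' {v}) :=
      fun t => hmeas t (measurableSet_singleton v)
    have hind : iIndepSet (fun t => ξ t ⁻¹' {v}) μ := by
      rw [iIndepSet_iff_meas_biInter hsm]
      intro s
      exact hindep.measure_inter_preimage_eq_mul s
        (fun i _ => measurableSet_singleton v)
    have htsum : (∑' t, μ (ξ t ⁻¹' {v})) = ∞ := by
      have hne : (1 : ℝ≥0∞) / ((m : ℝ≥0∞) ^ 2 * (n : ℝ≥0∞) ^ 2) ≠ 0 := by
        rw [Ne, ENNReal.div_eq_zero_iff]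
        push_neg
        refine ⟨one_ne_zero, ?_⟩
        exact ENNReal.mul_ne_top (by simp [ENNReal.pow_eq_top_iff])
          (by simp [ENNReal.pow_eq_top_iff])
      simp only [hunif]
      exact ENNReal.tsum_const_eq_top_of_ne_zero hne
    have hone := measure_limsup_eq_one hsm hind htsum
    have hmeaslim : MeasurableSet (limsup (fun t => ξ t ⁻¹' {v}) atTop) :=
      MeasurableSet.measurableSet_limsup hsm
    have hae : ∀ᵐ ω ∂μ, ω ∈ limsup (fun t => ξ t ⁻¹' {v}) atTop := by
      rw [ae_iff]
      have he : {ω | ¬ ω ∈ limsup (fun t => ξ t ⁻¹' {v}) atTop}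
          = (limsup (fun t => ξ t ⁻¹' {v}) atTop)ᶜ := rfl
      rw [he, prob_compl_eq_zero_iff hmeaslim]
      exact hone
    filter_upwards [hae] with ω hω
    intro N
    have hfreq := (mem_limsup_iff_frequently_mem).1 hω
    rw [frequently_atTop] at hfreq
    obtain ⟨t, ht, h2⟩ := hfreq N
    exact ⟨t, ht, h2⟩
  ----------------------------------------------------------------
  -- Part 2: pathwise convergence
  ----------------------------------------------------------------
  have hBe : ∀ (a b : Fin n), Bstar a b = γF * F Astar a b := by
    intro a b; rw [hfixB]; simp [Matrix.smul_apply, smul_eq_mul]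
  have hAe : ∀ (a b : Fin m), Astar a b = γG * G Bstar a b := by
    intro a b; rw [hfixA]; simp [Matrix.smul_apply, smul_eq_mul]
  filter_upwards [hgood] with ω hω
  obtain ⟨DA, hDA⟩ : ∃ f : ℕ → ℝ, ∀ t, f t = supNorm (Aseq ω t - Astar) := ⟨_, fun _ => rfl⟩
  obtain ⟨DB, hDB⟩ : ∃ f : ℕ → ℝ, ∀ t, f t = supNorm (Bseq ω t - Bstar) := ⟨_, fun _ => rfl⟩
  obtain ⟨V, hV⟩ : ∃ f : ℕ → ℝ, ∀ t, f t = max (DA t) (DB t) := ⟨_, fun _ => rfl⟩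
  have hDA0 : ∀ t, 0 ≤ DA t := fun t => (hDA t) ▸ supNorm_nonneg_s5 _
  have hDB0 : ∀ t, 0 ≤ DB t := fun t => (hDB t) ▸ supNorm_nonneg_s5 _
  have hV0 : ∀ t, 0 ≤ V t := fun t => (hV t) ▸ le_max_of_le_left (hDA0 t)
  have hDAV : ∀ t, DA t ≤ V t := fun t => (hV t) ▸ le_max_left _ _
  have hDBV : ∀ t, DB t ≤ V t := fun t => (hV t) ▸ le_max_right _ _
  have hDAe : ∀ t a b, |(Aseq ω t - Astar) a b| ≤ DA t := by
    intro t a b; rw [hDA t]; exact abs_entry_le_supNorm _ a b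
  have hDBe : ∀ t a b, |(Bseq ω t - Bstar) a b| ≤ DB t := by
    intro t a b; rw [hDB t]; exact abs_entry_le_supNorm _ a b
  -- entry recursions
  have hBentry : ∀ (t : ℕ) (a b : Fin n), (Bseq ω (t+1) - Bstar) a b
      = if (ξ t ω).2.1 = a ∧ (ξ t ω).2.2 = b
        then γF * F (Aseq ω t) a b - Bstar a b
        else (Bseq ω t - Bstar) a b := by
    intro t a b
    have h0 : Bseq ω (t+1) - Bstar = (Bseq ω t - Bstar)
        + (γF * F (Aseq ω t) (ξ t ω).2.1 (ξ t ω).2.2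
            - Bseq ω t (ξ t ω).2.1 (ξ t ω).2.2)
          • Matrix.single (ξ t ω).2.1 (ξ t ω).2.2 (1:ℝ) := by
      rw [hrecB ω t, Rop_sub]
    rw [h0, pert_apply]
    by_cases h : (ξ t ω).2.1 = a ∧ (ξ t ω).2.2 = b
    · obtain ⟨h1, h2⟩ := h
      rw [if_pos ⟨h1, h2⟩, if_pos ⟨h1, h2⟩]
      subst h1; subst h2
      simp only [Matrix.sub_apply]; ring
    · rw [if_neg h, if_neg h]
  have hAentry : ∀ (t : ℕ) (a b : Fin m), (Aseq ω (t+1) - Astar) a b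
      = if (ξ t ω).1.1 = a ∧ (ξ t ω).1.2 = b
        then (1-α) * ((Aseq ω t - Astar) a b)
          + α * γG * ((G (Bseq ω (t+1)) - G Bstar) a b)
        else (Aseq ω t - Astar) a b := by
    intro t a b
    have h0 : Aseq ω (t+1) - Astar = (Aseq ω t - Astar)
        + (α * (γG * G (Bseq ω (t+1)) (ξ t ω).1.1 (ξ t ω).1.2
            - Aseq ω t (ξ t ω).1.1 (ξ t ω).1.2))
          • Matrix.single (ξ t ω).1.1 (ξ t ω).1.2 (1:ℝ) := by
      rw [hrecA ω t, Sop_sub]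
    rw [h0, pert_apply]
    by_cases h : (ξ t ω).1.1 = a ∧ (ξ t ω).1.2 = b
    · obtain ⟨h1, h2⟩ := h
      rw [if_pos ⟨h1, h2⟩, if_pos ⟨h1, h2⟩]
      subst h1; subst h2
      simp only [Matrix.sub_apply, hAe]
      ring
    · rw [if_neg h, if_neg h]
  -- update bounds
  have hBup : ∀ (t : ℕ) (a b : Fin n),
      |γF * F (Aseq ω t) a b - Bstar a b| ≤ (γF * LF) * DA t := by
    intro t a b
    have he : γF * F (Aseq ω t) a b - Bstar a b
        = γF * ((F (Aseq ω t) - F Astar) a b) := by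
      rw [hBe]; simp only [Matrix.sub_apply]; ring
    rw [he, abs_mul, abs_of_pos hγF]
    have h1 : |(F (Aseq ω t) - F Astar) a b| ≤ LF * DA t := by
      refine (abs_entry_le_supNorm _ a b).trans ?_
      rw [hDA t]
      exact hF (Aseq ω t) Astar
    nlinarith
  have hAup : ∀ (t : ℕ) (a b : Fin m),
      |(1-α) * ((Aseq ω t - Astar) a b) + α * γG * ((G (Bseq ω (t+1)) - G Bstar) a b)|
        ≤ (1-α) * DA t + α * (γG * LG) * DB (t+1) := by
    intro t a b
    have h1 : |(Aseq ω t - Astar) a b| ≤ DA t := hDAe t a b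
    have h2 : |(G (Bseq ω (t+1)) - G Bstar) a b| ≤ LG * DB (t+1) := by
      refine (abs_entry_le_supNorm _ a b).trans ?_
      rw [hDB (t+1)]
      exact hG (Bseq ω (t+1)) Bstar
    calc |(1-α) * ((Aseq ω t - Astar) a b) + α * γG * ((G (Bseq ω (t+1)) - G Bstar) a b)|
        ≤ |(1-α) * ((Aseq ω t - Astar) a b)| + |α * γG * ((G (Bseq ω (t+1)) - G Bstar) a b)| :=
          abs_add_le _ _
      _ = (1-α) * |(Aseq ω t - Astar) a b| + α * γG * |(G (Bseq ω (t+1)) - G Bstar) a b| := by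
          rw [abs_mul, abs_mul, abs_of_nonneg (by linarith : (0:ℝ) ≤ 1 - α),
            abs_of_nonneg (by positivity : (0:ℝ) ≤ α * γG)]
      _ ≤ (1-α) * DA t + α * (γG * LG) * DB (t+1) := by nlinarith [mul_pos hα hγG]
  -- monotonicity
  have hMB : ∀ t, DB (t+1) ≤ V t := by
    intro t
    rw [hDB (t+1), supNorm_le_iff _ (hV0 t)]
    intro a b
    rw [show (Bseq ω (t+1) - Bstar) a b = _ from hBentry t a b]
    by_cases h : (ξ t ω).2.1 = a ∧ (ξ t ω).2.2 = b
    · rw [if_pos h]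
      refine (hBup t a b).trans ?_
      have := hDAV t
      nlinarith [hV0 t]
    · rw [if_neg h]
      exact (hDBe t a b).trans (hDBV t)
  have hMA : ∀ t, DA (t+1) ≤ V t := by
    intro t
    rw [hDA (t+1), supNorm_le_iff _ (hV0 t)]
    intro a b
    rw [show (Aseq ω (t+1) - Astar) a b = _ from hAentry t a b]
    by_cases h : (ξ t ω).1.1 = a ∧ (ξ t ω).1.2 = b
    · rw [if_pos h]
      refine (hAup t a b).trans ?_
      have h1 := hDAV t
      have h2 := hMB t
      have e1 : (1-α) * DA t ≤ (1-α) * V t :=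
        mul_le_mul_of_nonneg_left h1 (by linarith)
      have e2 : α*(γG*LG)*DB (t+1) ≤ α*(γG*LG)*V t :=
        mul_le_mul_of_nonneg_left h2 (by positivity)
      have e3 : α*(γG*LG)*V t ≤ α*V t := by
        nlinarith [mul_nonneg (mul_nonneg hα.le (hV0 t))
          (by linarith : (0:ℝ) ≤ 1 - γG*LG)]
      linarith
    · rw [if_neg h]
      exact (hDAe t a b).trans (hDAV t)
  have hVstep : ∀ t, V (t+1) ≤ V t := by
    intro t
    rw [hV (t+1)]
    exact max_le (hMA t) (hMB t)
  have hVmono : ∀ s t : ℕ, s ≤ t → V t ≤ V s :=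
    fun s t h => antitone_nat_of_succ_le hVstep h
  -- persistence
  have hPB : ∀ (T : ℕ) (a b : Fin n) (t : ℕ),
      (∃ u, T ≤ u ∧ u < t ∧ (ξ u ω).2 = (a, b)) →
      |(Bseq ω t - Bstar) a b| ≤ (γF * LF) * V T := by
    intro T a b t
    induction t with
    | zero => rintro ⟨u, _, hu, _⟩; exact absurd hu (Nat.not_lt_zero u)
    | succ t ih =>
      rintro ⟨u, hTu, hut, hξ⟩
      by_cases hc : (ξ t ω).2.1 = a ∧ (ξ t ω).2.2 = b
      · rw [show (Bseq ω (t+1) - Bstar) a b = _ from hBentry t a b, if_pos hc]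
        refine (hBup t a b).trans ?_
        have hTt : T ≤ t := by omega
        have h1 : DA t ≤ V T := (hDAV t).trans (hVmono T t hTt)
        nlinarith
      · rw [show (Bseq ω (t+1) - Bstar) a b = _ from hBentry t a b, if_neg hc]
        apply ih
        have hune : u ≠ t := by
          intro h; subst h; exact hc ⟨by rw [hξ], by rw [hξ]⟩
        exact ⟨u, hTu, by omega, hξ⟩
  have hPA : ∀ (T : ℕ) (a b : Fin m) (t : ℕ),
      (∃ u, T ≤ u ∧ u < t ∧ (ξ u ω).1 = (a, b)) →
      |(Aseq ω t - Astar) a b| ≤ (1 - α + α * (γG * LG)) * V T := by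
    intro T a b t
    induction t with
    | zero => rintro ⟨u, _, hu, _⟩; exact absurd hu (Nat.not_lt_zero u)
    | succ t ih =>
      rintro ⟨u, hTu, hut, hξ⟩
      by_cases hc : (ξ t ω).1.1 = a ∧ (ξ t ω).1.2 = b
      · rw [show (Aseq ω (t+1) - Astar) a b = _ from hAentry t a b, if_pos hc]
        refine (hAup t a b).trans ?_
        have hTt : T ≤ t := by omega
        have h1 : DA t ≤ V T := (hDAV t).trans (hVmono T t hTt)
        have h2 : DB (t+1) ≤ V T := (hMB t).trans (hVmono T t hTt)
        have e1 : (1-α) * DA t ≤ (1-α) * V T :=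
          mul_le_mul_of_nonneg_left h1 (by linarith)
        have e2 : α*(γG*LG)*DB (t+1) ≤ α*(γG*LG)*V T :=
          mul_le_mul_of_nonneg_left h2 (by positivity)
        nlinarith [e1, e2]
      · rw [show (Aseq ω (t+1) - Astar) a b = _ from hAentry t a b, if_neg hc]
        apply ih
        have hune : u ≠ t := by
          intro h; subst h; exact hc ⟨by rw [hξ], by rw [hξ]⟩
        exact ⟨u, hTu, by omega, hξ⟩
  -- sweep
  have hSW : ∀ T : ℕ, ∃ T', V T' ≤ q * V T := by
    intro T
    have hch : ∀ v : (Fin m × Fin m) × (Fin n × Fin n), ∃ u, T ≤ u ∧ ξ u ω = v :=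
      fun v => hω v T
    choose u hu1 hu2 using hch
    obtain ⟨T', hT'⟩ : ∃ T' : ℕ, T' = (Finset.univ.sup u) + 1 := ⟨_, rfl⟩
    have hlt : ∀ v, u v < T' := fun v =>
      hT' ▸ Nat.lt_succ_of_le (Finset.le_sup (Finset.mem_univ v))
    let k0 : Fin m := ⟨0, by omega⟩
    let i0 : Fin n := ⟨0, by omega⟩
    have hqV : 0 ≤ q * V T := mul_nonneg hq0 (hV0 T)
    refine ⟨T', ?_⟩
    rw [hV T']
    have hBT' : DB T' ≤ q * V T := by
      rw [hDB T', supNorm_le_iff _ hqV]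
      intro a b
      have hw : ∃ w, T ≤ w ∧ w < T' ∧ (ξ w ω).2 = (a, b) :=
        ⟨u ((k0, k0), (a, b)), hu1 _, hlt _, by rw [hu2]⟩
      refine (hPB T a b T' hw).trans ?_
      nlinarith [hV0 T]
    have hAT' : DA T' ≤ q * V T := by
      rw [hDA T', supNorm_le_iff _ hqV]
      intro a b
      have hw : ∃ w, T ≤ w ∧ w < T' ∧ (ξ w ω).1 = (a, b) :=
        ⟨u ((a, b), (i0, i0)), hu1 _, hlt _, by rw [hu2]⟩
      refine (hPA T a b T' hw).trans ?_
      nlinarith [hV0 T]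
    exact max_le hAT' hBT'
  -- V tends to 0
  have hVlim : Tendsto V atTop (𝓝 0) := by
    rw [Metric.tendsto_atTop]
    intro ε hε
    have hpow : Tendsto (fun k : ℕ => q^k * V 0) atTop (𝓝 0) := by
      have h := tendsto_pow_atTop_nhds_zero_of_lt_one hq0 hq1
      have := h.mul_const (V 0)
      simpa using this
    obtain ⟨K, hK⟩ := Metric.tendsto_atTop.1 hpow ε hε
    have hiter : ∀ k : ℕ, ∃ T, V T ≤ q^k * V 0 := by
      intro k
      induction k with
      | zero => exact ⟨0, by simp⟩
      | succ k ih =>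
        obtain ⟨T, hT⟩ := ih
        obtain ⟨T', hT'⟩ := hSW T
        refine ⟨T', ?_⟩
        calc V T' ≤ q * V T := hT'
          _ ≤ q * (q^k * V 0) := mul_le_mul_of_nonneg_left hT hq0
          _ = q^(k+1) * V 0 := by ring
    obtain ⟨T, hT⟩ := hiter K
    refine ⟨T, fun t ht => ?_⟩
    rw [Real.dist_eq, sub_zero, abs_of_nonneg (hV0 t)]
    have hKK := hK K le_rfl
    rw [Real.dist_eq, sub_zero, abs_of_nonneg (mul_nonneg (pow_nonneg hq0 K) (hV0 0))] at hKK
    calc V t ≤ V T := hVmono T t ht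
      _ ≤ q^K * V 0 := hT
      _ < ε := hKK
  -- conclude
  have hb : ∀ t, pairDistSq (Aseq ω t, Bseq ω t) (Astar, Bstar)
      ≤ ((m:ℝ)^2 + (n:ℝ)^2) * (V t)^2 := by
    intro t
    rw [pairDistSq, frobNorm_sq, frobNorm_sq]
    have hA : (∑ a, ∑ b, ((Aseq ω t - Astar) a b)^2) ≤ (m:ℝ)^2 * (V t)^2 := by
      have step : ∀ (a b : Fin m), ((Aseq ω t - Astar) a b)^2 ≤ (V t)^2 := by
        intro a b
        have h1 : |(Aseq ω t - Astar) a b| ≤ V t := (hDAe t a b).trans (hDAV t)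
        calc ((Aseq ω t - Astar) a b)^2 = |(Aseq ω t - Astar) a b|^2 := (sq_abs _).symm
          _ ≤ (V t)^2 := pow_le_pow_left₀ (abs_nonneg _) h1 2
      calc (∑ a, ∑ b, ((Aseq ω t - Astar) a b)^2)
          ≤ ∑ _a : Fin m, ∑ _b : Fin m, (V t)^2 :=
            Finset.sum_le_sum fun a _ => Finset.sum_le_sum fun b _ => step a b
        _ = (m:ℝ)^2 * (V t)^2 := by
            simp [Finset.sum_const, Finset.card_univ]
            ring
    have hB : (∑ a, ∑ b, ((Bseq ω t - Bstar) a b)^2) ≤ (n:ℝ)^2 * (V t)^2 := by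
      have step : ∀ (a b : Fin n), ((Bseq ω t - Bstar) a b)^2 ≤ (V t)^2 := by
        intro a b
        have h1 : |(Bseq ω t - Bstar) a b| ≤ V t := (hDBe t a b).trans (hDBV t)
        calc ((Bseq ω t - Bstar) a b)^2 = |(Bseq ω t - Bstar) a b|^2 := (sq_abs _).symm
          _ ≤ (V t)^2 := pow_le_pow_left₀ (abs_nonneg _) h1 2
      calc (∑ a, ∑ b, ((Bseq ω t - Bstar) a b)^2)
          ≤ ∑ _a : Fin n, ∑ _b : Fin n, (V t)^2 :=
            Finset.sum_le_sum fun a _ => Finset.sum_le_sum fun b _ => step a b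
        _ = (n:ℝ)^2 * (V t)^2 := by
            simp [Finset.sum_const, Finset.card_univ]
            ring
    linarith
  have hnn : ∀ t, 0 ≤ pairDistSq (Aseq ω t, Bseq ω t) (Astar, Bstar) := by
    intro t
    rw [pairDistSq]
    positivity
  have hlim2 : Tendsto (fun t => ((m:ℝ)^2 + (n:ℝ)^2) * (V t)^2) atTop (𝓝 0) := by
    have h1 := (hVlim.pow 2).const_mul ((m:ℝ)^2 + (n:ℝ)^2)
    simpa using h1
  exact squeeze_zero hnn hb hlim2

theorem random_function_iteration_convergence {m n : ℕ} (hm : 1 < m) (hn : 1 < n)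
    (F : Matrix (Fin m) (Fin m) ℝ → Matrix (Fin n) (Fin n) ℝ)
    (G : Matrix (Fin n) (Fin n) ℝ → Matrix (Fin m) (Fin m) ℝ)
    (LF LG γF γG α : ℝ) (hγF : 0 < γF) (hγG : 0 < γG) (hα : 0 < α) (hα1 : α < 1)
    (hLF : 0 < LF) (hLF' : LF ≤ Real.sqrt α / (Real.sqrt 2 * m * γF))
    (hLG : 0 < LG) (hLG' : LG ≤ 1 / (n * γG))
    (hF : ∀ A A', supNorm (F A - F A') ≤ LF * supNorm (A - A'))
    (hG : ∀ B B', supNorm (G B - G B') ≤ LG * supNorm (B - B'))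
    (Astar : Matrix (Fin m) (Fin m) ℝ) (Bstar : Matrix (Fin n) (Fin n) ℝ)
    (hfix : Astar = γG • G Bstar ∧ Bstar = γF • F Astar)
    {Ω : Type*} [MeasurableSpace Ω] (μ : Measure Ω) [IsProbabilityMeasure μ]
    (ξ : ℕ → Ω → (Fin m × Fin m) × (Fin n × Fin n))
    (hmeas : ∀ t, Measurable (ξ t))
    (hindep : iIndepFun ξ μ)
    (hunif : ∀ t x, μ (ξ t ⁻¹' {x}) = 1 / ((m : ENNReal) ^ 2 * (n : ENNReal) ^ 2))
    (Aseq : Ω → ℕ → Matrix (Fin m) (Fin m) ℝ)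
    (Bseq : Ω → ℕ → Matrix (Fin n) (Fin n) ℝ)
    (hrecB : ∀ ω t, Bseq ω (t + 1)
      = Rop F γF (ξ t ω).2.1 (ξ t ω).2.2 (Aseq ω t) (Bseq ω t))
    (hrecA : ∀ ω t, Aseq ω (t + 1)
      = Sop G γG α (ξ t ω).1.1 (ξ t ω).1.2 (Aseq ω t) (Bseq ω (t + 1))) :
    (1 - α / (m : ℝ) ^ 2 + (1 + α * γG ^ 2 * LG ^ 2) * γF ^ 2 * LF ^ 2 < 1) ∧
    ((1 + α * γG ^ 2 * LG ^ 2) * (1 - 1 / (n : ℝ) ^ 2) < 1) ∧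
    (∀ (A : Matrix (Fin m) (Fin m) ℝ) (B : Matrix (Fin n) (Fin n) ℝ),
      (1 / ((m : ℝ) ^ 2 * (n : ℝ) ^ 2)) *
        ∑ k : Fin m, ∑ l : Fin m, ∑ i : Fin n, ∑ j : Fin n,
          pairDistSq
            (Sop G γG α k l A (Rop F γF i j A B), Rop F γF i j A B) (Astar, Bstar)
        ≤ max (1 - α / (m : ℝ) ^ 2 + (1 + α * γG ^ 2 * LG ^ 2) * γF ^ 2 * LF ^ 2)
              ((1 + α * γG ^ 2 * LG ^ 2) * (1 - 1 / (n : ℝ) ^ 2))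
          * pairDistSq (A, B) (Astar, Bstar)) ∧
    (∀ᵐ ω ∂μ, Filter.Tendsto (fun t => pairDistSq (Aseq ω t, Bseq ω t) (Astar, Bstar))
        Filter.atTop (nhds 0)) := by
  obtain ⟨hfixA, hfixB⟩ := hfix
  obtain ⟨h1, h2⟩ := consts_lt hm hn LF LG γF γG α hγF hγG hα hα1 hLF hLF' hLG hLG'
  refine ⟨h1, h2, ?_, ?_⟩
  · intro A B
    exact contraction_step hm hn F G LF LG γF γG α hγF hγG hα hα1 hLF hLG hF hG
      Astar Bstar hfixA hfixB A B
  · exact as_conv hm hn F G LF LG γF γG α hγF hγG hα hα1 hLF hLF' hLG hLG' hF hG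
      Astar Bstar hfixA hfixB μ ξ hmeas hindep hunif Aseq Bseq hrecB hrecA
end
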